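/- Let H = {(z_1,z_2,z_3) ∈ ℂ³ : z_1 + x z_2 + y z_3 = 0 for some real x, y with x² + y² = 1}. Writing z_j = s_j + i t_j, the set H is exactly the real algebraic set defined by (s_3 t_1 − s_1 t_3)² + (s_2 t_1 − s_1 t_2)² = (s_3 t_2 − s_2 t_3)², at least at all points where s_3 t_2 − s_2 t_3 ≠ 0. -/

import Mathlib

/-- The union of hyperplanes `{z₁ + x z₂ + y z₃ = 0}` over the real circle
`x² + y² = 1` coincides, where `s₃t₂ - s₂t₃ ≠ 0`, with the real algebraic set
`(s₃t₁ - s₁t₃)² + (s₂t₁ - s₁t₂)² = (s₃t₂ - s₂t₃)²`. -/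
theorem stmt_14 (z₁ z₂ z₃ : ℂ)
    (hnd : z₃.re * z₂.im - z₂.re * z₃.im ≠ 0) :
    (∃ x y : ℝ, x^2 + y^2 = 1 ∧ z₁ + (x : ℂ) * z₂ + (y : ℂ) * z₃ = 0) ↔
    (z₃.re * z₁.im - z₁.re * z₃.im)^2 + (z₂.re * z₁.im - z₁.re * z₂.im)^2
      = (z₃.re * z₂.im - z₂.re * z₃.im)^2 := by
  have hD : z₂.re * z₃.im - z₃.re * z₂.im ≠ 0 := by
    intro h; apply hnd; linarith
  constructor
  · rintro ⟨x, y, hxy, h⟩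
    rw [Complex.ext_iff] at h
    simp only [Complex.add_re, Complex.add_im, Complex.mul_re, Complex.mul_im,
      Complex.ofReal_re, Complex.ofReal_im, Complex.zero_re, Complex.zero_im] at h
    obtain ⟨h1, h2⟩ := h
    have hx : (z₂.re * z₃.im - z₃.re * z₂.im) * x
        = z₃.re * z₁.im - z₁.re * z₃.im := by
      linear_combination z₃.im * h1 - z₃.re * h2
    have hy : (z₂.re * z₃.im - z₃.re * z₂.im) * y
        = z₁.re * z₂.im - z₂.re * z₁.im := by
      linear_combination z₂.re * h2 - z₂.im * h1
    linear_combination (z₂.re * z₃.im - z₃.re * z₂.im)^2 * hxy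
      - ((z₂.re * z₃.im - z₃.re * z₂.im) * x + (z₃.re * z₁.im - z₁.re * z₃.im)) * hx
      - ((z₂.re * z₃.im - z₃.re * z₂.im) * y - (z₂.re * z₁.im - z₁.re * z₂.im)) * hy
  · intro h
    refine ⟨(z₃.re * z₁.im - z₁.re * z₃.im) / (z₂.re * z₃.im - z₃.re * z₂.im),
      (z₁.re * z₂.im - z₂.re * z₁.im) / (z₂.re * z₃.im - z₃.re * z₂.im), ?_, ?_⟩
    · rw [div_pow, div_pow, ← add_div, div_eq_one_iff_eq (pow_ne_zero 2 hD)]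
      linear_combination h
    · rw [Complex.ext_iff]
      constructor <;>
      · simp only [Complex.add_re, Complex.add_im, Complex.mul_re, Complex.mul_im,
          Complex.ofReal_re, Complex.ofReal_im, Complex.zero_re, Complex.zero_im]
        simp only [div_mul_eq_mul_div, zero_mul, sub_zero, add_zero]
        rw [add_assoc, ← add_div, add_div' _ _ _ hD, div_eq_zero_iff]
        left
        ring
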